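/- If the Boltzmann policies of Q1* and Q2* coincide at every state (π1*(·|s) = π2*(·|s) for all s), then the composed bound of Lemma 1 is tight from below up to zero gap: C* = 0 and hence the optimal soft Q-function for r_C = (r1+r2)/2 equals Q_Σ = (Q1*+Q2*)/2. -/

import Mathlib

private lemma sum_exp_pos {A : Type} [Fintype A] [Nonempty A] (f : A → ℝ) :
    0 < ∑ a, Real.exp (f a) :=
  Finset.sum_pos (fun _ _ => Real.exp_pos _) Finset.univ_nonempty

/-- log-sum-exp is 1-Lipschitz in sup norm (one-sided). -/
private lemma lse_le {A : Type} [Fintype A] [Nonempty A] (f g : A → ℝ)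
    (M : ℝ) (hM : ∀ a, f a - g a ≤ M) :
    Real.log (∑ a, Real.exp (f a)) - Real.log (∑ a, Real.exp (g a)) ≤ M := by
  have h1 : ∑ a, Real.exp (f a) ≤ Real.exp M * ∑ a, Real.exp (g a) := by
    rw [Finset.mul_sum]
    refine Finset.sum_le_sum fun a _ => ?_
    rw [← Real.exp_add]
    exact Real.exp_le_exp.2 (by linarith [hM a])
  have h2 := Real.log_le_log (sum_exp_pos f) h1
  rw [Real.log_mul (Real.exp_ne_zero _) (ne_of_gt (sum_exp_pos g)), Real.log_exp] at h2
  linarith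

private lemma abs_lse_sub {A : Type} [Fintype A] [Nonempty A] (f g : A → ℝ)
    (M : ℝ) (hM : ∀ a, |f a - g a| ≤ M) :
    |Real.log (∑ a, Real.exp (f a)) - Real.log (∑ a, Real.exp (g a))| ≤ M := by
  rw [abs_le]
  constructor
  · have := lse_le g f M (fun a => by have := hM a; rw [abs_le] at this; linarith [this.1])
    linarith
  · exact lse_le f g M (fun a => (abs_le.1 (hM a)).2)

/-- contraction argument: if |D| ≤ γ · sup|D| pointwise with γ < 1, then D = 0. -/
private lemma contraction_zero {S A : Type} [Fintype S] [Fintype A] [Nonempty S] [Nonempty A]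
    (γ : ℝ) (hγ0 : 0 ≤ γ) (hγ1 : γ < 1) (D : S → A → ℝ)
    (h : ∀ s a, |D s a| ≤ γ *
      Finset.univ.sup' Finset.univ_nonempty (fun sa : S × A => |D sa.1 sa.2|)) :
    ∀ s a, D s a = 0 := by
  set N := Finset.univ.sup' Finset.univ_nonempty (fun sa : S × A => |D sa.1 sa.2|) with hN
  obtain ⟨sa, _, hsa⟩ := Finset.exists_mem_eq_sup' (Finset.univ_nonempty)
    (fun sa : S × A => |D sa.1 sa.2|)
  have hNval : N = |D sa.1 sa.2| := hsa
  have hN0 : 0 ≤ N := hNval ▸ abs_nonneg _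
  have hle : N ≤ γ * N := hNval ▸ h sa.1 sa.2
  have hN0' : N ≤ 0 := by nlinarith
  intro s a
  have := h s a
  have : |D s a| ≤ 0 := le_trans this (by nlinarith)
  exact abs_eq_zero.1 (le_antisymm this (abs_nonneg _))

/-- bound for weighted sums -/
private lemma abs_wsum_le {S : Type} [Fintype S] (w X : S → ℝ)
    (hw0 : ∀ s, 0 ≤ w s) (hw1 : ∑ s, w s = 1) (N : ℝ) (hX : ∀ s, |X s| ≤ N) :
    |∑ s, w s * X s| ≤ N := by
  calc |∑ s, w s * X s| ≤ ∑ s, |w s * X s| := Finset.abs_sum_le_sum_abs _ _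
    _ ≤ ∑ s, w s * N := by
        refine Finset.sum_le_sum fun s _ => ?_
        rw [abs_mul, abs_of_nonneg (hw0 s)]
        exact mul_le_mul_of_nonneg_left (hX s) (hw0 s)
    _ = N := by rw [← Finset.sum_mul, hw1, one_mul]

/-- If the Boltzmann policies of Q₁* and Q₂* coincide at every state, then C* = 0
and the optimal soft Q-function of the averaged reward equals (Q₁*+Q₂*)/2. -/
theorem composed_Q_tight_when_policies_agree
    {S A : Type} [Fintype S] [Fintype A] [Nonempty A]
    (γ : ℝ) (hγ0 : 0 ≤ γ) (hγ1 : γ < 1)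
    (p : S → A → S → ℝ)
    (hp0 : ∀ s a s', 0 ≤ p s a s')
    (hp1 : ∀ s a, ∑ s', p s a s' = 1)
    (r₁ r₂ : S → A → ℝ) (Q₁ Q₂ QC : S → A → ℝ)
    (hQ₁ : ∀ s a, Q₁ s a =
      r₁ s a + γ * ∑ s', p s a s' * Real.log (∑ a', Real.exp (Q₁ s' a')))
    (hQ₂ : ∀ s a, Q₂ s a =
      r₂ s a + γ * ∑ s', p s a s' * Real.log (∑ a', Real.exp (Q₂ s' a')))
    (hQC : ∀ s a, QC s a =
      (r₁ s a + r₂ s a) / 2 +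
        γ * ∑ s', p s a s' * Real.log (∑ a', Real.exp (QC s' a')))
    (π₁ π₂ : S → A → ℝ)
    (hπ₁ : ∀ s a, π₁ s a = Real.exp (Q₁ s a) / ∑ a', Real.exp (Q₁ s a'))
    (hπ₂ : ∀ s a, π₂ s a = Real.exp (Q₂ s a) / ∑ a', Real.exp (Q₂ s a'))
    (hagree : ∀ s a, π₁ s a = π₂ s a)
    (C : S → A → ℝ)
    (hC : ∀ s a, C s a =
      γ * ∑ s', p s a s' *
        ((1 / 2) * (-2 * Real.log (∑ a', Real.sqrt (π₁ s' a' * π₂ s' a'))) +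
          Finset.univ.sup' Finset.univ_nonempty (fun a' => C s' a'))) :
    (∀ s a, C s a = 0) ∧ (∀ s a, QC s a = (Q₁ s a + Q₂ s a) / 2) := by
  -- π₁ is nonnegative and sums to one
  have hπ1pos : ∀ s a, 0 ≤ π₁ s a := fun s a => by
    rw [hπ₁]; exact div_nonneg (Real.exp_pos _).le (sum_exp_pos _).le
  have hπsum : ∀ s, ∑ a, π₁ s a = 1 := fun s => by
    simp only [hπ₁]
    rw [← Finset.sum_div, div_self (ne_of_gt (sum_exp_pos _))]
  -- the divergence term vanishes
  have hdiv : ∀ s : S, Real.log (∑ a', Real.sqrt (π₁ s a' * π₂ s a')) = 0 := by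
    intro s
    have : (∑ a', Real.sqrt (π₁ s a' * π₂ s a')) = ∑ a', π₁ s a' := by
      refine Finset.sum_congr rfl fun a _ => ?_
      rw [← hagree s a, Real.sqrt_mul_self (hπ1pos s a)]
    rw [this, hπsum, Real.log_one]
  -- simplified recursion for C
  have hC' : ∀ s a, C s a = γ * ∑ s', p s a s' *
      Finset.univ.sup' Finset.univ_nonempty (fun a' => C s' a') := by
    intro s a
    rw [hC s a]
    congr 1
    refine Finset.sum_congr rfl fun s' _ => ?_
    rw [hdiv s']
    ring
  -- Part 1: C = 0
  have hCzero : ∀ s a, C s a = 0 := by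
    intro s a
    have : Nonempty S := ⟨s⟩
    refine contraction_zero γ hγ0 hγ1 C (fun s a => ?_) s a
    set N := Finset.univ.sup' Finset.univ_nonempty (fun sa : S × A => |C sa.1 sa.2|)
    rw [hC' s a, abs_mul, abs_of_nonneg hγ0]
    refine mul_le_mul_of_nonneg_left ?_ hγ0
    refine abs_wsum_le _ _ (hp0 s a) (hp1 s a) N fun s' => ?_
    obtain ⟨a', _, ha'⟩ := Finset.exists_mem_eq_sup' (Finset.univ_nonempty)
      (fun a' => C s' a')
    rw [ha']
    exact Finset.le_sup' (fun sa : S × A => |C sa.1 sa.2|) (Finset.mem_univ (s', a'))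
  refine ⟨hCzero, ?_⟩
  -- Part 2
  -- Q₁ - Q₂ is constant over actions: Q₁ s a - L₁ s = Q₂ s a - L₂ s
  have hdiff : ∀ s a, Q₁ s a - Real.log (∑ a', Real.exp (Q₁ s a'))
      = Q₂ s a - Real.log (∑ a', Real.exp (Q₂ s a')) := by
    intro s a
    have h := hagree s a
    rw [hπ₁, hπ₂] at h
    have h1 : Real.log (π₁ s a) = Real.log (π₂ s a) := by rw [hagree]
    rw [hπ₁, hπ₂, Real.log_div (Real.exp_ne_zero _) (ne_of_gt (sum_exp_pos _)),
      Real.log_div (Real.exp_ne_zero _) (ne_of_gt (sum_exp_pos _)),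
      Real.log_exp, Real.log_exp] at h1
    linarith
  -- lse of the average is the average of the lse's
  have hlse : ∀ s, Real.log (∑ a', Real.exp ((Q₁ s a' + Q₂ s a') / 2))
      = (Real.log (∑ a', Real.exp (Q₁ s a')) + Real.log (∑ a', Real.exp (Q₂ s a'))) / 2 := by
    intro s
    set L₁ := Real.log (∑ a', Real.exp (Q₁ s a')) with hL₁
    set L₂ := Real.log (∑ a', Real.exp (Q₂ s a')) with hL₂
    have : (∑ a', Real.exp ((Q₁ s a' + Q₂ s a') / 2))
        = Real.exp ((L₂ - L₁) / 2) * ∑ a', Real.exp (Q₁ s a') := by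
      rw [Finset.mul_sum]
      refine Finset.sum_congr rfl fun a _ => ?_
      rw [← Real.exp_add]
      congr 1
      have := hdiff s a
      linarith
    rw [this, Real.log_mul (Real.exp_ne_zero _) (ne_of_gt (sum_exp_pos _)), Real.log_exp,
      ← hL₁]
    ring
  -- the average satisfies the same fixed point equation as QC
  have havg : ∀ s a, (Q₁ s a + Q₂ s a) / 2 = (r₁ s a + r₂ s a) / 2 +
      γ * ∑ s', p s a s' * Real.log (∑ a', Real.exp ((Q₁ s' a' + Q₂ s' a') / 2)) := by
    intro s a
    have h1 := hQ₁ s a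
    have h2 := hQ₂ s a
    have hsum : ∑ s', p s a s' * Real.log (∑ a', Real.exp ((Q₁ s' a' + Q₂ s' a') / 2))
        = (∑ s', p s a s' * Real.log (∑ a', Real.exp (Q₁ s' a'))
          + ∑ s', p s a s' * Real.log (∑ a', Real.exp (Q₂ s' a'))) / 2 := by
      rw [← Finset.sum_add_distrib, Finset.sum_div]
      refine Finset.sum_congr rfl fun s' _ => ?_
      rw [hlse s']; ring
    rw [hsum]; linarith
  -- contraction for D = QC - avg
  intro s a
  have : Nonempty S := ⟨s⟩
  have hD := contraction_zero γ hγ0 hγ1 (fun s a => QC s a - (Q₁ s a + Q₂ s a) / 2)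
    (fun s a => ?_) s a
  · linarith
  · set N := Finset.univ.sup' Finset.univ_nonempty
      (fun sa : S × A => |QC sa.1 sa.2 - (Q₁ sa.1 sa.2 + Q₂ sa.1 sa.2) / 2|) with hN
    have heq : QC s a - (Q₁ s a + Q₂ s a) / 2
        = γ * ∑ s', p s a s' * (Real.log (∑ a', Real.exp (QC s' a'))
          - Real.log (∑ a', Real.exp ((Q₁ s' a' + Q₂ s' a') / 2))) := by
      rw [hQC s a, havg s a,
        show ∀ x y z : ℝ, x + γ * y - (x + γ * z) = γ * (y - z) by intros; ring,
        ← Finset.sum_sub_distrib]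
      congr 1
      exact Finset.sum_congr rfl fun s' _ => by ring
    show |QC s a - (Q₁ s a + Q₂ s a) / 2| ≤ γ * N
    rw [heq, abs_mul, abs_of_nonneg hγ0]
    refine mul_le_mul_of_nonneg_left ?_ hγ0
    refine abs_wsum_le _ _ (hp0 s a) (hp1 s a) N fun s' => ?_
    refine abs_lse_sub _ _ N fun a' => ?_
    exact Finset.le_sup'
      (fun sa : S × A => |QC sa.1 sa.2 - (Q₁ sa.1 sa.2 + Q₂ sa.1 sa.2) / 2|)
      (Finset.mem_univ (s', a'))
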